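/- Let f = ∏_{i=1}^d (X − ζᵢ) ∈ ℂ[X] with ζᵢ pairwise distinct. Every rational function of the form g/f^s with g ∈ ℂ[X] and s ≥ 1 can be written as h' + ∑_{i=1}^d cᵢ/(X − ζᵢ), where h ∈ ℂ[X]_f is a rational function with poles only at the ζᵢ, h' is its derivative, and cᵢ ∈ ℂ. -/

import Mathlib

open Polynomial

noncomputable def pfExpr (f p : Polynomial ℂ) (k : ℕ) : RatFunc ℂ :=
  algebraMap (Polynomial ℂ) (RatFunc ℂ)
      (derivative p * f ^ k - p * derivative (f ^ k)) /
    (algebraMap (Polynomial ℂ) (RatFunc ℂ) f) ^ (2 * k)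

lemma pf_antideriv (g : Polynomial ℂ) : ∃ G : Polynomial ℂ, derivative G = g := by
  induction g using Polynomial.induction_on' with
  | add p q hp hq =>
      obtain ⟨P, hP⟩ := hp; obtain ⟨Q, hQ⟩ := hq
      exact ⟨P + Q, by simp [hP, hQ]⟩
  | monomial n a =>
      refine ⟨C (a / (n+1)) * X ^ (n+1), ?_⟩
      rw [derivative_C_mul, derivative_X_pow, ← mul_assoc, ← C_mul, Nat.add_sub_cancel]
      have h1 : ((n : ℂ) + 1) ≠ 0 := Nat.cast_add_one_ne_zero n
      have : a / (↑n + 1) * ↑(n + 1) = a := by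
        push_cast
        exact div_mul_cancel₀ a h1
      rw [this, C_mul_X_pow_eq_monomial]

lemma pfExpr_add (f p q : Polynomial ℂ) (k m : ℕ) (hf : f ≠ 0) :
    pfExpr f p k + pfExpr f q m = pfExpr f (p * f ^ m + q * f ^ k) (k + m) := by
  have hF : algebraMap (Polynomial ℂ) (RatFunc ℂ) f ≠ 0 := by
    simpa using RatFunc.algebraMap_ne_zero hf
  unfold pfExpr
  rw [div_add_div _ _ (pow_ne_zero _ hF) (pow_ne_zero _ hF), ← pow_add]
  have h2 : 2 * k + 2 * m = 2 * (k + m) := by ring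
  rw [h2, ← map_pow, ← map_pow, ← map_mul, ← map_mul, ← map_add]
  congr 1
  apply congrArg
  rw [pow_add f k m]
  simp only [derivative_mul, derivative_add]
  ring

lemma pfExpr_poly (f G : Polynomial ℂ) : pfExpr f G 0 = algebraMap _ _ (derivative G) := by
  simp [pfExpr]

lemma pfExpr_single (z : ℂ) (gq : Polynomial ℂ) (hg : gq ≠ 0) (a : ℂ) (u : ℕ) :
    pfExpr ((X - C z) * gq) (C a * gq ^ (u + 1)) (u + 1) =
      RatFunc.C (-((u : ℂ) + 1) * a) /
        (algebraMap (Polynomial ℂ) (RatFunc ℂ) (X - C z)) ^ (u + 2) := by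
  have hfne : (X - C z) * gq ≠ 0 := mul_ne_zero (X_sub_C_ne_zero z) hg
  have hF : algebraMap (Polynomial ℂ) (RatFunc ℂ) ((X - C z) * gq) ≠ 0 := by
    simpa using RatFunc.algebraMap_ne_zero hfne
  have hD : algebraMap (Polynomial ℂ) (RatFunc ℂ) (X - C z) ≠ 0 := by
    simpa using RatFunc.algebraMap_ne_zero (X_sub_C_ne_zero z)
  have hN : derivative (C a * gq ^ (u + 1)) * ((X - C z) * gq) ^ (u + 1)
      - (C a * gq ^ (u + 1)) * derivative (((X - C z) * gq) ^ (u + 1))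
      = C (-((u : ℂ) + 1) * a) * ((X - C z) * gq) ^ u * gq ^ (u + 2) := by
    have hdw : derivative ((X - C z) * gq) = gq + (X - C z) * derivative gq := by
      simp [derivative_mul]
    rw [derivative_C_mul, derivative_pow, derivative_pow, hdw, Nat.add_sub_cancel]
    generalize (X - C z) = y
    simp only [C_mul, C_neg, C_add, C_1, map_natCast, mul_pow]
    push_cast
    ring
  unfold pfExpr
  rw [hN, div_eq_div_iff (pow_ne_zero _ hF) (pow_ne_zero _ hD), ← RatFunc.algebraMap_C,
    ← map_pow, ← map_mul, ← map_pow, ← map_mul]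
  apply congrArg
  simp only [mul_pow]
  ring

theorem partial_fractions_mod_derivatives
    (d : ℕ) (ζ : Fin d → ℂ) (hζ : Function.Injective ζ)
    (f : Polynomial ℂ) (hf : f = ∏ i : Fin d, (X - C (ζ i)))
    (g : Polynomial ℂ) (s : ℕ) (hs : 1 ≤ s) :
    ∃ (p : Polynomial ℂ) (k : ℕ) (c : Fin d → ℂ),
      algebraMap (Polynomial ℂ) (RatFunc ℂ) g /
          (algebraMap (Polynomial ℂ) (RatFunc ℂ) f) ^ s =
        algebraMap (Polynomial ℂ) (RatFunc ℂ)
            (derivative p * f ^ k - p * derivative (f ^ k)) /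
          (algebraMap (Polynomial ℂ) (RatFunc ℂ) f) ^ (2 * k) +
        ∑ i : Fin d, RatFunc.C (c i) /
          algebraMap (Polynomial ℂ) (RatFunc ℂ) (X - C (ζ i)) := by
  classical
  set A := algebraMap (Polynomial ℂ) (RatFunc ℂ) with hA
  have hfne : f ≠ 0 := by
    rw [hf]
    exact (monic_prod_of_monic _ _ fun i _ => monic_X_sub_C _).ne_zero
  set M : RatFunc ℂ → Prop := fun x =>
    ∃ (p : Polynomial ℂ) (k : ℕ) (c : Fin d → ℂ),
      x = pfExpr f p k + ∑ i : Fin d, RatFunc.C (c i) / A (X - C (ζ i)) with hM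
  have M_zero : M 0 := ⟨0, 0, 0, by simp [pfExpr]⟩
  have M_add : ∀ x y, M x → M y → M (x + y) := by
    rintro x y ⟨p, k, c, rfl⟩ ⟨q, m, c', rfl⟩
    refine ⟨p * f ^ m + q * f ^ k, k + m, c + c', ?_⟩
    rw [← pfExpr_add f p q k m hfne]
    have : ∑ i : Fin d, RatFunc.C ((c + c') i) / A (X - C (ζ i)) =
        (∑ i : Fin d, RatFunc.C (c i) / A (X - C (ζ i))) +
        ∑ i : Fin d, RatFunc.C (c' i) / A (X - C (ζ i)) := by
      rw [← Finset.sum_add_distrib]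
      exact Finset.sum_congr rfl fun i _ => by
        simp [add_div, map_add]
    rw [this]; ring
  have M_poly : ∀ r : Polynomial ℂ, M (A r) := by
    intro r
    obtain ⟨G, hG⟩ := pf_antideriv r
    exact ⟨G, 0, 0, by simp [pfExpr_poly, hG, hA]⟩
  have M_single : ∀ (t : ℕ) (r : Polynomial ℂ) (i : Fin d),
      M (A r / (A (X - C (ζ i))) ^ t) := by
    intro t
    induction t with
    | zero => intro r i; simpa using M_poly r
    | succ t ih =>
      intro r i
      set z := ζ i with hz
      have hD : A (X - C z) ≠ 0 := by
        simpa [hA] using RatFunc.algebraMap_ne_zero (X_sub_C_ne_zero z)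
      set e := r.eval z with he
      obtain ⟨q, hq⟩ : (X - C z) ∣ (r - C e) :=
        dvd_iff_isRoot.mpr (by simp [IsRoot, he])
      have hr : r = C e + (X - C z) * q := by linear_combination hq
      have hsplit : A r / (A (X - C z)) ^ (t + 1) =
          A (C e) / (A (X - C z)) ^ (t + 1) + A q / (A (X - C z)) ^ t := by
        rw [hr, map_add, map_mul, add_div]
        congr 1
        rw [pow_succ, mul_comm (A (X - C z)) (A q), mul_div_mul_right _ _ hD]
      rw [hsplit]
      refine M_add _ _ ?_ (ih q i)
      -- the pure pole term
      cases t with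
      | zero =>
        refine ⟨0, 0, fun j => if j = i then e else 0, ?_⟩
        have : ∑ j : Fin d, RatFunc.C (if j = i then e else 0) / A (X - C (ζ j)) =
            RatFunc.C e / A (X - C z) := by
          rw [Fintype.sum_eq_single i fun j hj => by simp [hj]]
          simp [hz]
        rw [this]
        simp [pfExpr, hA, RatFunc.algebraMap_C]
      | succ u =>
        set gq : Polynomial ℂ := ∏ l ∈ Finset.univ.erase i, (X - C (ζ l)) with hgq
        have hgne : gq ≠ 0 :=
          (monic_prod_of_monic _ _ fun l _ => monic_X_sub_C _).ne_zero
        have hfsplit : f = (X - C z) * gq := by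
          rw [hf, hgq, hz]
          exact (Finset.mul_prod_erase _ _ (Finset.mem_univ i)).symm
        have hu1 : ((u : ℂ) + 1) ≠ 0 := Nat.cast_add_one_ne_zero u
        refine ⟨C (-e / ((u : ℂ) + 1)) * gq ^ (u + 1), u + 1, 0, ?_⟩
        rw [hfsplit, pfExpr_single z gq hgne _ u]
        have : -((u : ℂ) + 1) * (-e / ((u : ℂ) + 1)) = e := by
          field_simp
        rw [this]
        simp [hA, RatFunc.algebraMap_C, RatFunc.algebraMap_X]
  -- partial fraction decomposition
  obtain ⟨q, r, _, hpf⟩ := div_prod_eq_quo_add_sum_rem_div (RatFunc ℂ) g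
    (g := fun i => (X - C (ζ i)) ^ s) (s := Finset.univ)
    (fun i _ => (monic_X_sub_C _).pow s)
    (fun i _ j _ hij => (pairwise_coprime_X_sub_C hζ hij).pow)
  have hfs : (A f) ^ s = ∏ i : Fin d, A ((X - C (ζ i)) ^ s) := by
    rw [← map_pow, hf, ← Finset.prod_pow, map_prod]
  have hM' : M (A g / (A f) ^ s) := by
    rw [hfs]
    have hpf' : A g / ∏ i : Fin d, A ((X - C (ζ i)) ^ s) =
        A q + ∑ i : Fin d, A (r i) / A ((X - C (ζ i)) ^ s) := hpf
    rw [hpf']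
    refine M_add _ _ (M_poly q) ?_
    refine Finset.sum_induction _ M M_add M_zero fun i _ => ?_
    rw [map_pow]
    exact M_single s (r i) i
  obtain ⟨p, k, c, hpk⟩ := hM'
  exact ⟨p, k, c, by rw [hpk]; rfl⟩
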